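/- If three triangles in the plane with pairwise disjoint interiors pairwise share edges (forming K₃ in the dual graph), then the three triangles have exactly 4 vertices in total, and in particular each triangle's vertex set is contained in the union of the vertex sets of the other two. -/

import Mathlib

open scoped Classical

/-- A nondegenerate triangle in the plane, given by its vertex set. -/
def IsTriangle (V : Finset (EuclideanSpace ℝ (Fin 2))) : Prop :=
  V.card = 3 ∧ AffineIndependent ℝ (fun x : V => (x : EuclideanSpace ℝ (Fin 2)))

/-- Two triangles share an edge: they have exactly 2 common vertices and their
intersection is the convex hull of those common vertices. -/
def SharesEdge (V W : Finset (EuclideanSpace ℝ (Fin 2))) : Prop :=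
  (V ∩ W).card = 2 ∧
    convexHull ℝ (V : Set (EuclideanSpace ℝ (Fin 2))) ∩
        convexHull ℝ (W : Set (EuclideanSpace ℝ (Fin 2))) =
      convexHull ℝ ((V ∩ W : Finset (EuclideanSpace ℝ (Fin 2))) : Set (EuclideanSpace ℝ (Fin 2)))

local notation "E2" => EuclideanSpace ℝ (Fin 2)

lemma triangle_indep {V : Finset E2}
    (h : AffineIndependent ℝ (fun x : V => (x : E2)))
    {a b c : E2} (ha : a ∈ V) (hb : b ∈ V) (hc : c ∈ V)
    (hab : a ≠ b) (hac : a ≠ c) (hbc : b ≠ c) :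
    AffineIndependent ℝ ![a, b, c] := by
  have hinj : Function.Injective (![⟨a, ha⟩, ⟨b, hb⟩, ⟨c, hc⟩] : Fin 3 → V) := by
    intro i j hij
    fin_cases i <;> fin_cases j <;>
      simp_all [Subtype.ext_iff]
  have := h.comp_embedding ⟨![⟨a, ha⟩, ⟨b, hb⟩, ⟨c, hc⟩], hinj⟩
  convert this using 1
  funext i
  fin_cases i <;> rfl

lemma span_top_of_indep {a b c : E2} (h : AffineIndependent ℝ ![a, b, c]) :
    affineSpan ℝ (Set.range ![a, b, c]) = ⊤ := by
  rw [h.affineSpan_eq_top_iff_card_eq_finrank_add_one]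
  simp

lemma coord_expand (B B' : AffineBasis (Fin 3) ℝ E2)
    (h0 : B' 0 = B 0) (h1 : B' 1 = B 1) (x : E2) :
    B.coord 2 x = B'.coord 2 x * B.coord 2 (B' 2) := by
  conv_lhs => rw [← B'.affineCombination_coord_eq_self x]
  rw [Finset.map_affineCombination _ _ _ (B'.sum_coord_apply_eq_one x) (B.coord 2),
    Finset.affineCombination_eq_linear_combination _ _ _ (B'.sum_coord_apply_eq_one x)]
  simp [Fin.sum_univ_three, h0, h1, AffineBasis.coord_apply]

lemma same_side (B B' : AffineBasis (Fin 3) ℝ E2)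
    (h0 : B 0 = B' 0) (h1 : B 1 = B' 1) (hpos : 0 < B.coord 2 (B' 2)) :
    ¬ Disjoint (interior (convexHull ℝ (Set.range ⇑B)))
      (interior (convexHull ℝ (Set.range ⇑B'))) := by
  set l := B.coord 0 (B' 2) with hl
  set m := B.coord 1 (B' 2) with hm
  set M : ℝ := |l| + |m| + 1 with hM
  have hM1 : (1 : ℝ) ≤ M := by
    have := abs_nonneg l; have := abs_nonneg m; rw [hM]; linarith
  have habs_l : |l| ≤ M := by
    have := abs_nonneg m; rw [hM]; linarith
  have habs_m : |m| ≤ M := by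
    have := abs_nonneg l; rw [hM]; linarith
  set ε : ℝ := 1 / (4 * M) with hε
  have hMpos : (0:ℝ) < M := by linarith
  have hε0 : 0 < ε := by positivity
  have hεM : ε * M = 1 / 4 := by
    rw [hε]; field_simp
  have hε4 : ε ≤ 1 / 4 := by
    nlinarith
  have hεl : (1 - ε) / 2 + ε * l > 0 := by
    have h1' : ε * l ≥ -(ε * M) := by
      have : l ≥ -M := by
        have := neg_abs_le l; linarith
      nlinarith
    nlinarith
  have hεm : (1 - ε) / 2 + ε * m > 0 := by
    have h1' : ε * m ≥ -(ε * M) := by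
      have : m ≥ -M := by
        have := neg_abs_le m; linarith
      nlinarith
    nlinarith
  set w : Fin 3 → ℝ := ![(1 - ε) / 2, (1 - ε) / 2, ε] with hw
  have hwsum : ∑ i, w i = 1 := by
    simp [hw, Fin.sum_univ_three]
  set p : E2 := Finset.univ.affineCombination ℝ ⇑B' w with hp
  have hp' : p ∈ interior (convexHull ℝ (Set.range ⇑B')) := by
    rw [B'.interior_convexHull]
    intro i
    rw [hp, B'.coord_apply_combination_of_mem (Finset.mem_univ i) hwsum]
    fin_cases i <;> simp [hw] <;> linarith
  have hpmem : p ∈ interior (convexHull ℝ (Set.range ⇑B)) := by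
    rw [B.interior_convexHull]
    intro i
    have hcoord : B.coord i p =
        w 0 * B.coord i (B' 0) + w 1 * B.coord i (B' 1) + w 2 * B.coord i (B' 2) := by
      rw [hp, Finset.map_affineCombination _ _ _ hwsum (B.coord i),
        Finset.affineCombination_eq_linear_combination _ _ _ hwsum]
      simp [Fin.sum_univ_three]
    rw [hcoord]
    fin_cases i <;>
      simp [← h0, ← h1, AffineBasis.coord_apply, hw, ← hl, ← hm] <;>
      · first
        | linarith
        | positivity
  exact Set.not_disjoint_iff.mpr ⟨p, hpmem, hp'⟩

lemma K3_aux (V₁ V₂ V₃ : Finset E2)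
    (h1 : IsTriangle V₁) (h2 : IsTriangle V₂) (h3 : IsTriangle V₃)
    (hd12 : Disjoint (interior (convexHull ℝ (V₁ : Set E2)))
      (interior (convexHull ℝ (V₂ : Set E2))))
    (hd13 : Disjoint (interior (convexHull ℝ (V₁ : Set E2)))
      (interior (convexHull ℝ (V₃ : Set E2))))
    (hd23 : Disjoint (interior (convexHull ℝ (V₂ : Set E2)))
      (interior (convexHull ℝ (V₃ : Set E2))))
    (hT : (V₁ ∩ V₂ ∩ V₃).card = 2) : False := by
  obtain ⟨a, b, hab, hTab⟩ := Finset.card_eq_two.mp hT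
  have hTsub1 : V₁ ∩ V₂ ∩ V₃ ⊆ V₁ := fun x hx =>
    (Finset.mem_inter.mp (Finset.mem_inter.mp hx).1).1
  have hTsub2 : V₁ ∩ V₂ ∩ V₃ ⊆ V₂ := fun x hx =>
    (Finset.mem_inter.mp (Finset.mem_inter.mp hx).1).2
  have hTsub3 : V₁ ∩ V₂ ∩ V₃ ⊆ V₃ := fun x hx => (Finset.mem_inter.mp hx).2
  have hextract : ∀ V : Finset E2, V.card = 3 → V₁ ∩ V₂ ∩ V₃ ⊆ V →
      ∃ c, c ≠ a ∧ c ≠ b ∧ V = insert c {a, b} := by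
    intro V hV hsub
    have hcard : (V \ (V₁ ∩ V₂ ∩ V₃)).card = 1 := by
      rw [Finset.card_sdiff_of_subset hsub, hV, hT]
    obtain ⟨c, hc⟩ := Finset.card_eq_one.mp hcard
    have hcmem : c ∈ V \ (V₁ ∩ V₂ ∩ V₃) := hc ▸ Finset.mem_singleton_self c
    have hcnot : c ∉ V₁ ∩ V₂ ∩ V₃ := (Finset.mem_sdiff.mp hcmem).2
    rw [hTab] at hcnot
    refine ⟨c, fun h => hcnot (by simp [h]), fun h => hcnot (by simp [h]), ?_⟩
    rw [← Finset.sdiff_union_of_subset hsub, hc, hTab]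
    ext x; simp; tauto
  obtain ⟨c₁, hc₁a, hc₁b, hV₁⟩ := hextract V₁ h1.1 hTsub1
  obtain ⟨c₂, hc₂a, hc₂b, hV₂⟩ := hextract V₂ h2.1 hTsub2
  obtain ⟨c₃, hc₃a, hc₃b, hV₃⟩ := hextract V₃ h3.1 hTsub3
  have hmem : ∀ (V : Finset E2) (c : E2), V = insert c {a, b} →
      a ∈ V ∧ b ∈ V ∧ c ∈ V := by
    intro V c hV; subst hV; refine ⟨?_, ?_, ?_⟩ <;> simp
  obtain ⟨ha1, hb1, hc1⟩ := hmem V₁ c₁ hV₁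
  obtain ⟨ha2, hb2, hc2⟩ := hmem V₂ c₂ hV₂
  obtain ⟨ha3, hb3, hc3⟩ := hmem V₃ c₃ hV₃
  have hind₁ : AffineIndependent ℝ ![a, b, c₁] :=
    triangle_indep h1.2 ha1 hb1 hc1 hab hc₁a.symm hc₁b.symm
  have hind₂ : AffineIndependent ℝ ![a, b, c₂] :=
    triangle_indep h2.2 ha2 hb2 hc2 hab hc₂a.symm hc₂b.symm
  have hind₃ : AffineIndependent ℝ ![a, b, c₃] :=
    triangle_indep h3.2 ha3 hb3 hc3 hab hc₃a.symm hc₃b.symm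
  let B₁ : AffineBasis (Fin 3) ℝ E2 := ⟨![a, b, c₁], hind₁, span_top_of_indep hind₁⟩
  let B₂ : AffineBasis (Fin 3) ℝ E2 := ⟨![a, b, c₂], hind₂, span_top_of_indep hind₂⟩
  let B₃ : AffineBasis (Fin 3) ℝ E2 := ⟨![a, b, c₃], hind₃, span_top_of_indep hind₃⟩
  have hrange : ∀ (B : AffineBasis (Fin 3) ℝ E2) (c : E2) (V : Finset E2),
      ⇑B = ![a, b, c] → V = insert c {a, b} → Set.range ⇑B = (V : Set E2) := by
    intro B c V hB hV
    rw [hB, hV]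
    ext x
    simp [Matrix.range_cons, Matrix.range_empty, or_comm, or_left_comm]
  have hrange1 : Set.range ⇑B₁ = (V₁ : Set E2) := hrange B₁ c₁ V₁ rfl hV₁
  have hrange2 : Set.range ⇑B₂ = (V₂ : Set E2) := hrange B₂ c₂ V₂ rfl hV₂
  have hrange3 : Set.range ⇑B₃ = (V₃ : Set E2) := hrange B₃ c₃ V₃ rfl hV₃
  have hne : ∀ B' : AffineBasis (Fin 3) ℝ E2, B' 0 = a → B' 1 = b →
      B₃.coord 2 (B' 2) ≠ 0 := by
    intro B' h0 h1 h
    have hex := coord_expand B₃ B' (by rw [h0]; rfl) (by rw [h1]; rfl) (B₃ 2)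
    rw [B₃.coord_apply_eq, h] at hex
    simp at hex
  have hs1 : B₃.coord 2 (B₁ 2) ≠ 0 := hne B₁ rfl rfl
  have hs2 : B₃.coord 2 (B₂ 2) ≠ 0 := hne B₂ rfl rfl
  rcases lt_or_gt_of_ne hs1 with hneg1 | hpos1
  · rcases lt_or_gt_of_ne hs2 with hneg2 | hpos2
    · -- both c₁ and c₂ on the negative side of line ab relative to B₃
      have hex := coord_expand B₃ B₁ rfl rfl (B₂ 2)
      have hpos : 0 < B₁.coord 2 (B₂ 2) := by nlinarith
      refine same_side B₁ B₂ rfl rfl hpos ?_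
      rw [hrange1, hrange2]
      exact hd12
    · refine same_side B₃ B₂ rfl rfl hpos2 ?_
      rw [hrange3, hrange2]
      exact hd23.symm
  · refine same_side B₃ B₁ rfl rfl hpos1 ?_
    rw [hrange3, hrange1]
    exact hd13.symm

/-- Three triangles with pairwise disjoint interiors that pairwise share edges
(forming `K₃` in the dual graph) have exactly 4 vertices in total, and each
triangle's vertex set is contained in the union of the other two. -/
theorem K3_four_vertices (V₁ V₂ V₃ : Finset (EuclideanSpace ℝ (Fin 2)))
    (h1 : IsTriangle V₁) (h2 : IsTriangle V₂) (h3 : IsTriangle V₃)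
    (hd12 : Disjoint (interior (convexHull ℝ (V₁ : Set (EuclideanSpace ℝ (Fin 2)))))
      (interior (convexHull ℝ (V₂ : Set (EuclideanSpace ℝ (Fin 2))))))
    (hd13 : Disjoint (interior (convexHull ℝ (V₁ : Set (EuclideanSpace ℝ (Fin 2)))))
      (interior (convexHull ℝ (V₃ : Set (EuclideanSpace ℝ (Fin 2))))))
    (hd23 : Disjoint (interior (convexHull ℝ (V₂ : Set (EuclideanSpace ℝ (Fin 2)))))
      (interior (convexHull ℝ (V₃ : Set (EuclideanSpace ℝ (Fin 2))))))
    (hs12 : SharesEdge V₁ V₂) (hs13 : SharesEdge V₁ V₃) (hs23 : SharesEdge V₂ V₃) :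
    (V₁ ∪ V₂ ∪ V₃).card = 4 ∧
      V₁ ⊆ V₂ ∪ V₃ ∧ V₂ ⊆ V₁ ∪ V₃ ∧ V₃ ⊆ V₁ ∪ V₂ := by
  have c12 : (V₁ ∩ V₂).card = 2 := hs12.1
  have c13 : (V₁ ∩ V₃).card = 2 := hs13.1
  have c23 : (V₂ ∩ V₃).card = 2 := hs23.1
  have hV1 : V₁.card = 3 := h1.1
  have hV2 : V₂.card = 3 := h2.1
  have hV3 : V₃.card = 3 := h3.1
  -- intersections of the shared-edge sets
  have hI1 : (V₁ ∩ V₂) ∩ (V₁ ∩ V₃) = V₁ ∩ V₂ ∩ V₃ := by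
    ext x; simp only [Finset.mem_inter]; tauto
  have hI2 : (V₁ ∩ V₂) ∩ (V₂ ∩ V₃) = V₁ ∩ V₂ ∩ V₃ := by
    ext x; simp only [Finset.mem_inter]; tauto
  have hI3 : (V₁ ∩ V₃) ∩ (V₂ ∩ V₃) = V₁ ∩ V₂ ∩ V₃ := by
    ext x; simp only [Finset.mem_inter]; tauto
  -- the triple intersection has exactly one element
  have hTcard : (V₁ ∩ V₂ ∩ V₃).card = 1 := by
    have hle2 : (V₁ ∩ V₂ ∩ V₃).card ≤ 2 := by
      calc (V₁ ∩ V₂ ∩ V₃).card ≤ (V₁ ∩ V₂).card :=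
            Finset.card_le_card Finset.inter_subset_left
        _ = 2 := c12
    have hsubU : (V₁ ∩ V₂) ∪ (V₁ ∩ V₃) ⊆ V₁ := by
      intro x hx
      rcases Finset.mem_union.mp hx with h | h
      · exact (Finset.mem_inter.mp h).1
      · exact (Finset.mem_inter.mp h).1
    have hUle : ((V₁ ∩ V₂) ∪ (V₁ ∩ V₃)).card ≤ 3 := hV1 ▸ Finset.card_le_card hsubU
    have hcui := Finset.card_union_add_card_inter (V₁ ∩ V₂) (V₁ ∩ V₃)
    rw [hI1, c12, c13] at hcui
    have hne2 : (V₁ ∩ V₂ ∩ V₃).card ≠ 2 := fun h =>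
      K3_aux V₁ V₂ V₃ h1 h2 h3 hd12 hd13 hd23 h
    omega
  -- each triangle is covered by the other two
  have hcover : ∀ (A B V : Finset E2), A ∪ B ⊆ V → V.card = 3 →
      A.card = 2 → B.card = 2 → (A ∩ B).card = 1 → V ⊆ A ∪ B := by
    intro A B V hsub hV hA hB hAB
    have hcui := Finset.card_union_add_card_inter A B
    rw [hA, hB, hAB] at hcui
    have := Finset.eq_of_subset_of_card_le hsub (by omega)
    rw [this]
  have hsub1 : V₁ ⊆ V₂ ∪ V₃ := by
    have h := hcover (V₁ ∩ V₂) (V₁ ∩ V₃) V₁ ?_ hV1 c12 c13 (by rw [hI1, hTcard])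
    · intro x hx
      rcases Finset.mem_union.mp (h hx) with h' | h'
      · exact Finset.mem_union_left _ (Finset.mem_inter.mp h').2
      · exact Finset.mem_union_right _ (Finset.mem_inter.mp h').2
    · intro x hx
      rcases Finset.mem_union.mp hx with h' | h'
      · exact (Finset.mem_inter.mp h').1
      · exact (Finset.mem_inter.mp h').1
  have hsub2 : V₂ ⊆ V₁ ∪ V₃ := by
    have h := hcover (V₁ ∩ V₂) (V₂ ∩ V₃) V₂ ?_ hV2 c12 c23 (by rw [hI2, hTcard])
    · intro x hx
      rcases Finset.mem_union.mp (h hx) with h' | h'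
      · exact Finset.mem_union_left _ (Finset.mem_inter.mp h').1
      · exact Finset.mem_union_right _ (Finset.mem_inter.mp h').2
    · intro x hx
      rcases Finset.mem_union.mp hx with h' | h'
      · exact (Finset.mem_inter.mp h').2
      · exact (Finset.mem_inter.mp h').1
  have hsub3 : V₃ ⊆ V₁ ∪ V₂ := by
    have h := hcover (V₁ ∩ V₃) (V₂ ∩ V₃) V₃ ?_ hV3 c13 c23 (by rw [hI3, hTcard])
    · intro x hx
      rcases Finset.mem_union.mp (h hx) with h' | h'
      · exact Finset.mem_union_left _ (Finset.mem_inter.mp h').1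
      · exact Finset.mem_union_right _ (Finset.mem_inter.mp h').1
    · intro x hx
      rcases Finset.mem_union.mp hx with h' | h'
      · exact (Finset.mem_inter.mp h').2
      · exact (Finset.mem_inter.mp h').2
  refine ⟨?_, hsub1, hsub2, hsub3⟩
  have hU : V₁ ∪ V₂ ∪ V₃ = V₂ ∪ V₃ := by
    apply Finset.Subset.antisymm
    · intro x hx
      rcases Finset.mem_union.mp hx with h | h
      · rcases Finset.mem_union.mp h with h' | h'
        · exact hsub1 h'
        · exact Finset.mem_union_left _ h'
      · exact Finset.mem_union_right _ h
    · intro x hx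
      rcases Finset.mem_union.mp hx with h | h
      · exact Finset.mem_union.mpr (Or.inl (Finset.mem_union_right _ h))
      · exact Finset.mem_union_right _ h
  rw [hU]
  have hcui := Finset.card_union_add_card_inter V₂ V₃
  rw [c23, hV2, hV3] at hcui
  omega
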